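/- Let μ be a Borel measure, Q a square, and suppose: 2Q is not (1/40, b)-balanced with respect to μ; θ_μ(2Q) ≤ C₄·A·θ; and θ_μ((1/2)Q) ≥ C₄⁻¹·δ·θ, where θ > 0, A, δ, C₄ are positive constants. If b is sufficiently small compared to δ/A (specifically 2·10⁵·b·C₄²·A ≤ δ/2 suffices, and also 2·10⁵·b ≤ 1/20 appropriately), then μ(2Q ∖ Q) ≤ (1/10)·μ(Q). -/

import Mathlib

open MeasureTheory

/-- The closed axis-parallel square with center `c` and side length `l`. -/
def square (c : ℂ) (l : ℝ) : Set ℂ := {z | |z.re - c.re| ≤ l / 2 ∧ |z.im - c.im| ≤ l / 2}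

/-- The square with center `c` and side `l` is `(a,b)`-balanced with respect to `μ`. -/
def IsBalanced (μ : Measure ℂ) (a b : ℝ) (c : ℂ) (l : ℝ) : Prop :=
  ∃ (c₁ : ℂ) (l₁ : ℝ) (c₂ : ℂ) (l₂ : ℝ),
    square c₁ l₁ ⊆ square c l ∧ square c₂ l₂ ⊆ square c l ∧
    (∀ p ∈ square c₁ l₁, ∀ q ∈ square c₂ l₂, a * l ≤ dist p q) ∧
    l₁ ≤ a / 10 * l ∧ l₂ ≤ a / 10 * l ∧
    ENNReal.ofReal b * μ (square c l) ≤ μ (square c₁ l₁) ∧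
    ENNReal.ofReal b * μ (square c l) ≤ μ (square c₂ l₂)

/-- The linear density `θ_μ(Q) = μ(Q)/ℓ(Q)` of the square with center `c` and side `l`. -/
noncomputable def lindens (μ : Measure ℂ) (c : ℂ) (l : ℝ) : ℝ := (μ (square c l)).toReal / l

lemma square_mono {c : ℂ} {a b : ℝ} (h : a ≤ b) : square c a ⊆ square c b :=
  fun _ hz => ⟨hz.1.trans (by linarith), hz.2.trans (by linarith)⟩

/-- center of grid cell (i,j) in an n×n grid of the square with center c, side s -/
noncomputable def cen (c : ℂ) (s : ℝ) (n i j : ℕ) : ℂ :=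
  ⟨c.re - s/2 + (2*i+1)*(s/(2*n)), c.im - s/2 + (2*j+1)*(s/(2*n))⟩

lemma coord_cover {s : ℝ} (hs : 0 < s) {n : ℕ} (hn : 0 < n) {u : ℝ}
    (h0 : 0 ≤ u) (h1 : u ≤ s) :
    ∃ i : ℕ, i < n ∧ |u - (2*i+1)*(s/(2*n))| ≤ s/(2*n) := by
  have hn' : (0:ℝ) < n := by exact_mod_cast hn
  set i := min ⌊u * n / s⌋₊ (n-1) with hidef
  have hin : i < n := lt_of_le_of_lt (min_le_right _ _) (by omega)
  refine ⟨i, hin, ?_⟩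
  have hbound : (i : ℝ) ≤ u * n / s ∧ u * n / s ≤ i + 1 := by
    rcases le_or_gt ⌊u * n / s⌋₊ (n-1) with h | h
    · have hi' : i = ⌊u * n / s⌋₊ := min_eq_left h
      rw [hi']
      exact ⟨Nat.floor_le (by positivity), (Nat.lt_floor_add_one _).le⟩
    · have hi' : i = n - 1 := min_eq_right h.le
      have hc : ((n:ℝ) - 1) = ((n-1 : ℕ) : ℝ) := by
        rw [Nat.cast_sub hn]; simp
      have h2 : u * n / s ≤ n := by
        rw [div_le_iff₀ hs]; nlinarith
      have h3 : (n:ℝ) ≤ u * n / s := by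
        have : ((n:ℕ):ℝ) ≤ (⌊u * n / s⌋₊ : ℝ) := by exact_mod_cast (by omega : n ≤ ⌊u * n / s⌋₊)
        exact this.trans (Nat.floor_le (by positivity))
      rw [hi', ← hc]
      constructor <;> linarith
  obtain ⟨hb1, hb2⟩ := hbound
  have hkey : (2*(n:ℝ)) * (s/(2*n)) = s := by field_simp
  have hm1 : (i:ℝ) * s ≤ u * n := by
    rw [le_div_iff₀ hs] at hb1; linarith
  have hm2 : u * n ≤ ((i:ℝ)+1) * s := by
    rw [div_le_iff₀ hs] at hb2; linarith
  rw [abs_le]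
  constructor <;> nlinarith [mul_pos hs hn', sq_nonneg ((n:ℝ))]

lemma cell_subset {c : ℂ} {s : ℝ} (hs : 0 < s) {n i j : ℕ} (hn : 0 < n)
    (hi : i < n) (hj : j < n) :
    square (cen c s n i j) (s/n) ⊆ square c s := by
  intro z hz
  obtain ⟨h1, h2⟩ := hz
  have hn' : (0:ℝ) < n := by exact_mod_cast hn
  have hkey : (2*(n:ℝ)) * (s/(2*n)) = s := by field_simp
  have hpos : 0 < s/(2*n) := by positivity
  have hci : (2*(i:ℝ)+1) ≤ 2*(n:ℝ) - 1 := by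
    have : (i:ℝ) + 1 ≤ (n:ℝ) := by exact_mod_cast hi
    linarith
  have hcj : (2*(j:ℝ)+1) ≤ 2*(n:ℝ) - 1 := by
    have : (j:ℝ) + 1 ≤ (n:ℝ) := by exact_mod_cast hj
    linarith
  have hi0 : (1:ℝ) ≤ 2*(i:ℝ)+1 := by
    have : (0:ℝ) ≤ (i:ℝ) := Nat.cast_nonneg i
    linarith
  have hj0 : (1:ℝ) ≤ 2*(j:ℝ)+1 := by
    have : (0:ℝ) ≤ (j:ℝ) := Nat.cast_nonneg j
    linarith
  have e1 : (cen c s n i j).re = c.re - s/2 + (2*i+1)*(s/(2*n)) := rfl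
  have e2 : (cen c s n i j).im = c.im - s/2 + (2*j+1)*(s/(2*n)) := rfl
  have hd : s/(n:ℝ)/2 = s/(2*n) := by rw [div_div, mul_comm]
  rw [abs_le, hd] at h1 h2
  rw [e1] at h1
  rw [e2] at h2
  refine ⟨?_, ?_⟩
  · rw [abs_le]
    constructor <;>
    linarith [mul_le_mul_of_nonneg_right hci hpos.le, mul_le_mul_of_nonneg_right hi0 hpos.le]
  · rw [abs_le]
    constructor <;>
    linarith [mul_le_mul_of_nonneg_right hcj hpos.le, mul_le_mul_of_nonneg_right hj0 hpos.le]

lemma square_cover {c : ℂ} {s : ℝ} (hs : 0 < s) {n : ℕ} (hn : 0 < n) :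
    square c s ⊆ ⋃ p ∈ Finset.range n ×ˢ Finset.range n,
      square (cen c s n p.1 p.2) (s/n) := by
  intro z hz
  obtain ⟨h1, h2⟩ := hz
  rw [abs_le] at h1 h2
  obtain ⟨i, hi, hi2⟩ := coord_cover hs hn (u := z.re - c.re + s/2) (by linarith) (by linarith)
  obtain ⟨j, hj, hj2⟩ := coord_cover hs hn (u := z.im - c.im + s/2) (by linarith) (by linarith)
  have hn' : (0:ℝ) < n := by exact_mod_cast hn
  have hd : s/(n:ℝ)/2 = s/(2*n) := by rw [div_div, mul_comm]
  refine Set.mem_iUnion₂.mpr ⟨(i, j), by simp [Finset.mem_product, hi, hj], ?_, ?_⟩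
  · have e : z.re - (cen c s n i j).re = (z.re - c.re + s/2) - (2*i+1)*(s/(2*n)) := by
      show z.re - (c.re - s/2 + (2*(i:ℝ)+1)*(s/(2*(n:ℝ)))) = _
      ring
    rw [e, hd]; exact hi2
  · have e : z.im - (cen c s n i j).im = (z.im - c.im + s/2) - (2*j+1)*(s/(2*n)) := by
      show z.im - (c.im - s/2 + (2*(j:ℝ)+1)*(s/(2*(n:ℝ)))) = _
      ring
    rw [e, hd]; exact hj2

lemma pigeon {ι : Type*} (S : Finset ι) (hS : S.Nonempty) (f : ι → ENNReal) {t : ENNReal}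
    (h : t ≤ ∑ s ∈ S, f s) : ∃ s ∈ S, t ≤ S.card * f s := by
  obtain ⟨m, hm, hmax⟩ := S.exists_max_image f hS
  refine ⟨m, hm, h.trans ?_⟩
  calc ∑ s ∈ S, f s ≤ S.card • f m := Finset.sum_le_card_nsmul S f _ (fun x hx => hmax x hx)
  _ = S.card * f m := nsmul_eq_mul _ _

/-- covering estimate: if T ⊆ square c s then μ T is at most the sum of the cell pieces -/
lemma cover_sum (μ : Measure ℂ) {c : ℂ} {s : ℝ} (hs : 0 < s) {n : ℕ} (hn : 0 < n)
    {T : Set ℂ} (hT : T ⊆ square c s) :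
    μ T ≤ ∑ p ∈ Finset.range n ×ˢ Finset.range n,
      μ (square (cen c s n p.1 p.2) (s/n) ∩ T) := by
  have hc : T ⊆ ⋃ p ∈ Finset.range n ×ˢ Finset.range n,
      square (cen c s n p.1 p.2) (s/n) ∩ T := by
    intro z hz
    obtain ⟨p, hp, hzp⟩ := Set.mem_iUnion₂.mp (square_cover hs hn (hT hz))
    exact Set.mem_iUnion₂.mpr ⟨p, hp, hzp, hz⟩
  exact (measure_mono hc).trans (measure_biUnion_finset_le _ _)

set_option maxRecDepth 8000 in
theorem stmt7 (μ : Measure ℂ) [IsFiniteMeasure μ]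
    (b θ A δ C₄ : ℝ) (hb : 0 < b) (hθ : 0 < θ) (hA : 0 < A) (hδ : 0 < δ) (hC₄ : 0 < C₄)
    (c : ℂ) (l : ℝ) (hl : 0 < l)
    (hbal : ¬ IsBalanced μ (1 / 40) b c (2 * l))
    (hhigh : lindens μ c (2 * l) ≤ C₄ * A * θ)
    (hlow : C₄⁻¹ * δ * θ ≤ lindens μ c (l / 2))
    (hb1 : 2 * 10 ^ 5 * b * C₄ ^ 2 * A ≤ δ / 2)
    (hb2 : 2 * 10 ^ 5 * b ≤ 1 / 20) :
    μ (square c (2 * l) \ square c l) ≤ (1 / 10 : ENNReal) * μ (square c l) := by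
  by_contra hcon
  push_neg at hcon
  set D := square c (2 * l) \ square c l with hD
  have hl2 : (0:ℝ) < 2 * l := by linarith
  have hlh : (0:ℝ) < l / 2 := by linarith
  have hfin : ∀ S : Set ℂ, μ S ≠ ⊤ := fun S => measure_ne_top μ S
  -- density bounds
  have hμ2 : μ (square c (2*l)) ≤ ENNReal.ofReal (C₄*A*θ*(2*l)) := by
    have h := hhigh
    unfold lindens at h
    rw [div_le_iff₀ hl2] at h
    calc μ (square c (2*l)) = ENNReal.ofReal ((μ (square c (2*l))).toReal) :=
          (ENNReal.ofReal_toReal (hfin _)).symm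
    _ ≤ _ := ENNReal.ofReal_le_ofReal h
  have hμh : ENNReal.ofReal (C₄⁻¹*δ*θ*(l/2)) ≤ μ (square c (l/2)) := by
    have h := hlow
    unfold lindens at h
    rw [le_div_iff₀ hlh] at h
    calc ENNReal.ofReal (C₄⁻¹*δ*θ*(l/2))
        ≤ ENNReal.ofReal ((μ (square c (l/2))).toReal) := ENNReal.ofReal_le_ofReal h
    _ = _ := ENNReal.ofReal_toReal (hfin _)
  have hhpos : 0 < μ (square c (l/2)) :=
    lt_of_lt_of_le (ENNReal.ofReal_pos.mpr (by positivity)) hμh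
  have hDpos : 0 < μ D := by
    have h1 : 0 < μ (square c l) :=
      lt_of_lt_of_le hhpos (measure_mono (square_mono (by linarith)))
    have h2 : (0 : ENNReal) < 1 / 10 * μ (square c l) :=
      ENNReal.mul_pos (by norm_num) h1.ne'
    exact h2.trans hcon
  -- grids
  set G1 : Finset (ℕ × ℕ) := Finset.range 100 ×ˢ Finset.range 100 with hG1
  set G2 : Finset (ℕ × ℕ) := Finset.range 400 ×ˢ Finset.range 400 with hG2
  have hG1card : (G1.card : ENNReal) = 10000 := by
    rw [hG1, Finset.card_product, Finset.card_range]; norm_num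
  have hG2card : (G2.card : ENNReal) = 160000 := by
    rw [hG2, Finset.card_product, Finset.card_range]; norm_num
  -- pigeonhole for the half square
  obtain ⟨p₁, hp₁G, hp₁⟩ : ∃ p ∈ G1, μ (square c (l/2))
      ≤ 10000 * μ (square (cen c (l/2) 100 p.1 p.2) ((l/2)/100)) := by
    obtain ⟨p, hp, h⟩ := pigeon G1 ⟨(0,0), by rw [hG1]; simp⟩ _
      ((cover_sum μ hlh (by norm_num) (subset_refl _)).trans
        (Finset.sum_le_sum (fun q _ => measure_mono Set.inter_subset_left)))
    exact ⟨p, hp, by rwa [hG1card] at h⟩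
  -- pigeonhole for the annulus
  obtain ⟨p₂, hp₂G, hp₂⟩ : ∃ p ∈ G2, μ D
      ≤ 160000 * μ (square (cen c (2*l) 400 p.1 p.2) ((2*l)/400) ∩ D) := by
    obtain ⟨p, hp, h⟩ := pigeon G2 ⟨(0,0), by rw [hG2]; simp⟩ _
      (cover_sum μ hl2 (by norm_num) Set.diff_subset)
    exact ⟨p, hp, by rwa [hG2card] at h⟩
  set K1 := square (cen c (l/2) 100 p₁.1 p₁.2) ((l/2)/100) with hK1
  set K2 := square (cen c (2*l) 400 p₂.1 p₂.2) ((2*l)/400) with hK2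
  rw [hG1, Finset.mem_product, Finset.mem_range, Finset.mem_range] at hp₁G
  rw [hG2, Finset.mem_product, Finset.mem_range, Finset.mem_range] at hp₂G
  have hK1sub : K1 ⊆ square c (l/2) := cell_subset hlh (by norm_num) hp₁G.1 hp₁G.2
  have hK2sub : K2 ⊆ square c (2*l) := cell_subset hl2 (by norm_num) hp₂G.1 hp₂G.2
  -- witness point in K2 ∩ D
  have hK2Dpos : μ (K2 ∩ D) ≠ 0 := by
    intro h0
    rw [h0, mul_zero] at hp₂
    exact hDpos.ne' (le_antisymm hp₂ (by positivity))
  obtain ⟨v, hvK2, hvD⟩ := nonempty_of_measure_ne_zero hK2Dpos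
  -- the two balance cells give a contradiction
  apply hbal
  refine ⟨cen c (l/2) 100 p₁.1 p₁.2, (l/2)/100, cen c (2*l) 400 p₂.1 p₂.2, (2*l)/400,
    hK1sub.trans (square_mono (by linarith)), hK2sub, ?_, by linarith, by linarith, ?_, ?_⟩
  · -- distance condition
    intro p hp q hq
    have hpc : |p.re - c.re| ≤ l/4 ∧ |p.im - c.im| ≤ l/4 := by
      have := hK1sub hp
      obtain ⟨a1, a2⟩ := this
      constructor <;> [skip; skip] <;>
      · first
        | (refine a1.trans ?_; linarith)
        | (refine a2.trans ?_; linarith)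
    have hqv_re : |q.re - v.re| ≤ l/200 := by
      obtain ⟨b1, _⟩ := hq
      obtain ⟨c1, _⟩ := hvK2
      calc |q.re - v.re| ≤ |q.re - (cen c (2*l) 400 p₂.1 p₂.2).re|
            + |(cen c (2*l) 400 p₂.1 p₂.2).re - v.re| := abs_sub_le _ _ _
      _ ≤ (2*l)/400/2 + (2*l)/400/2 := by
          refine add_le_add b1 ?_
          rw [abs_sub_comm]; exact c1
      _ = l/200 := by ring
    have hqv_im : |q.im - v.im| ≤ l/200 := by
      obtain ⟨_, b2⟩ := hq
      obtain ⟨_, c2⟩ := hvK2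
      calc |q.im - v.im| ≤ |q.im - (cen c (2*l) 400 p₂.1 p₂.2).im|
            + |(cen c (2*l) 400 p₂.1 p₂.2).im - v.im| := abs_sub_le _ _ _
      _ ≤ (2*l)/400/2 + (2*l)/400/2 := by
          refine add_le_add b2 ?_
          rw [abs_sub_comm]; exact c2
      _ = l/200 := by ring
    have hvout : l/2 < |v.re - c.re| ∨ l/2 < |v.im - c.im| := by
      have := hvD.2
      rw [square, Set.mem_setOf_eq] at this
      push_neg at this
      by_cases hre : |v.re - c.re| ≤ l/2
      · exact Or.inr (this hre)
      · exact Or.inl (lt_of_not_ge hre)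
    have hre_le : |p.re - q.re| ≤ dist p q := by
      have : dist p q = ‖p - q‖ := Complex.dist_eq p q
      rw [this]
      have := Complex.abs_re_le_norm (p - q)
      rwa [Complex.sub_re] at this
    have him_le : |p.im - q.im| ≤ dist p q := by
      have : dist p q = ‖p - q‖ := Complex.dist_eq p q
      rw [this]
      have := Complex.abs_im_le_norm (p - q)
      rwa [Complex.sub_im] at this
    have hgoal : 1/40 * (2*l) = l/20 := by ring
    rw [hgoal]
    rcases hvout with h | h
    · have t1 : |v.re - c.re| ≤ |v.re - q.re| + |q.re - p.re| + |p.re - c.re| := by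
        calc |v.re - c.re| ≤ |v.re - p.re| + |p.re - c.re| := abs_sub_le _ _ _
        _ ≤ (|v.re - q.re| + |q.re - p.re|) + |p.re - c.re| :=
            add_le_add_left (abs_sub_le _ _ _) _
      have t2 : |v.re - q.re| = |q.re - v.re| := abs_sub_comm _ _
      have t3 : |q.re - p.re| = |p.re - q.re| := abs_sub_comm _ _
      have : l/20 ≤ |p.re - q.re| := by
        rw [t2, t3] at t1
        linarith [hpc.1]
      linarith [hre_le]
    · have t1 : |v.im - c.im| ≤ |v.im - q.im| + |q.im - p.im| + |p.im - c.im| := by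
        calc |v.im - c.im| ≤ |v.im - p.im| + |p.im - c.im| := abs_sub_le _ _ _
        _ ≤ (|v.im - q.im| + |q.im - p.im|) + |p.im - c.im| :=
            add_le_add_left (abs_sub_le _ _ _) _
      have t2 : |v.im - q.im| = |q.im - v.im| := abs_sub_comm _ _
      have t3 : |q.im - p.im| = |p.im - q.im| := abs_sub_comm _ _
      have : l/20 ≤ |p.im - q.im| := by
        rw [t2, t3] at t1
        linarith [hpc.2]
      linarith [him_le]
  · -- measure condition for K1
    have key : (10000 : ENNReal) * (ENNReal.ofReal b * μ (square c (2*l)))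
        ≤ 10000 * μ K1 := by
      calc (10000 : ENNReal) * (ENNReal.ofReal b * μ (square c (2*l)))
          ≤ 10000 * (ENNReal.ofReal b * ENNReal.ofReal (C₄*A*θ*(2*l))) := by
            gcongr
      _ = ENNReal.ofReal (10000 * (b * (C₄*A*θ*(2*l)))) := by
            rw [← ENNReal.ofReal_mul hb.le, ← ENNReal.ofReal_ofNat 10000,
              ← ENNReal.ofReal_mul (by norm_num)]
      _ ≤ ENNReal.ofReal (C₄⁻¹*δ*θ*(l/2)) := by
            refine ENNReal.ofReal_le_ofReal ?_
            have h' : 10000 * (b * (C₄*A*θ*(2*l))) * C₄ ≤ δ*θ*(l/2) := by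
              nlinarith [mul_le_mul_of_nonneg_right hb1 (mul_pos hθ hl).le,
                mul_pos (mul_pos (mul_pos hb (pow_pos hC₄ 2)) hA) (mul_pos hθ hl)]
            have h'' : 10000 * (b * (C₄*A*θ*(2*l))) ≤ δ*θ*(l/2)/C₄ :=
              (le_div_iff₀ hC₄).mpr h'
            calc 10000 * (b * (C₄*A*θ*(2*l))) ≤ δ*θ*(l/2)/C₄ := h''
            _ = C₄⁻¹*δ*θ*(l/2) := by ring
      _ ≤ μ (square c (l/2)) := hμh
      _ ≤ 10000 * μ K1 := hp₁
    have h10 : (10000 : ENNReal) ≠ 0 := by norm_num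
    have h10' : (10000 : ENNReal) ≠ ⊤ := by norm_num
    exact (ENNReal.mul_le_mul_iff_right h10 h10').mp key
  · -- measure condition for K2
    have hsplit : μ (square c (2*l)) ≤ μ (square c l) + μ D := by
      have : square c (2*l) ⊆ square c l ∪ D := by
        intro z hz
        by_cases h : z ∈ square c l
        · exact Or.inl h
        · exact Or.inr ⟨hz, h⟩
      exact (measure_mono this).trans (measure_union_le _ _)
    have hQD : μ (square c l) ≤ 10 * μ D := by
      have h1 : μ (square c l) = 10 * ((1/10 : ENNReal) * μ (square c l)) := by
        rw [← mul_assoc]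
        norm_num
        rw [ENNReal.mul_inv_cancel (by norm_num) (by norm_num), one_mul]
      rw [h1]
      exact mul_le_mul_right hcon.le _
    have h2Q : μ (square c (2*l)) ≤ 11 * μ D := by
      calc μ (square c (2*l)) ≤ μ (square c l) + μ D := hsplit
      _ ≤ 10 * μ D + 1 * μ D := by
          rw [one_mul]; exact add_le_add hQD le_rfl
      _ = 11 * μ D := by rw [← add_mul]; norm_num
    have key : (160000 : ENNReal) * (ENNReal.ofReal b * μ (square c (2*l)))
        ≤ 160000 * μ K2 := by
      calc (160000 : ENNReal) * (ENNReal.ofReal b * μ (square c (2*l)))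
          ≤ 160000 * (ENNReal.ofReal b * (11 * μ D)) := by gcongr
      _ = (160000 * 11 * ENNReal.ofReal b) * μ D := by ring
      _ ≤ 1 * μ D := by
          gcongr
          calc (160000 : ENNReal) * 11 * ENNReal.ofReal b
              = 1760000 * ENNReal.ofReal b := by norm_num
          _ = ENNReal.ofReal (1760000 * b) := by
              rw [ENNReal.ofReal_mul (by norm_num), ENNReal.ofReal_ofNat]
          _ ≤ 1 := ENNReal.ofReal_le_one.mpr (by nlinarith)
      _ = μ D := one_mul _
      _ ≤ 160000 * μ (K2 ∩ D) := hp₂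
      _ ≤ 160000 * μ K2 := by
          gcongr
          exact Set.inter_subset_left
    have h16 : (160000 : ENNReal) ≠ 0 := by norm_num
    have h16' : (160000 : ENNReal) ≠ ⊤ := by norm_num
    exact (ENNReal.mul_le_mul_iff_right h16 h16').mp key
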